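/- arXiv:0810.2037 — 2 statements merged into one kernel-verified Lean document; each statement's English description precedes it below -/
import Mathlib

section
/- Let A₁ and A₂ be rings, W an (A₁,A₂)-bimodule that is finitely generated and projective as a left A₁-module, and A = A₁[W]A₂ the triangular matrix ring of matrices (a₁ w; 0 a₂). Then every left A-module M such that e₁M is a projective A₁-module and e₂M is a projective A₂-module (where e₁, e₂ are the diagonal idempotents) has projective dimension at most 1. -/
noncomputable section

variable (A₁ A₂ W : Type) [Ring A₁] [Ring A₂]
  [AddCommGroup W] [Module A₁ W] [Module A₂ᵐᵒᵖ W] [SMulCommClass A₁ A₂ᵐᵒᵖ W]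

/-- `W` as a left module over `A₁ × A₂` (via the first factor). -/
instance modLeft : Module (A₁ × A₂) W := Module.compHom W (RingHom.fst A₁ A₂)

/-- `W` as a right module over `A₁ × A₂` (via the second factor). -/
instance modRight : Module (A₁ × A₂)ᵐᵒᵖ W :=
  Module.compHom W (RingHom.op (RingHom.snd A₁ A₂))

instance commCls : SMulCommClass (A₁ × A₂) (A₁ × A₂)ᵐᵒᵖ W :=
  ⟨fun r s w => smul_comm r.1 (MulOpposite.op s.unop.2) w⟩

/-- The triangular matrix ring `A₁[W]A₂` of matrices `(a₁ w; 0 a₂)`, realized as the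
trivial square-zero extension of `A₁ × A₂` by the `(A₁,A₂)`-bimodule `W`. -/
abbrev TriRing := TrivSqZeroExt (A₁ × A₂) W

/-- The diagonal idempotent `e₁ = (1 0; 0 0)`. -/
def e1 : TriRing A₁ A₂ W := TrivSqZeroExt.inl ((1 : A₁), (0 : A₂))

/-- The diagonal idempotent `e₂ = (0 0; 0 1)`. -/
def e2 : TriRing A₁ A₂ W := TrivSqZeroExt.inl ((0 : A₁), (1 : A₂))

/-- The statement that the corner `e • M` of a module `M` over a ring `A`, regarded as a
module over a ring `A'` acting through `ι : A' → A`, is a projective `A'`-module: there is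
a projective `A'`-module `Q` and an additive isomorphism of `Q` onto `e • M` carrying the
`A'`-action to the action through `ι`. -/
def CornerProjective (A' A M : Type) [Ring A'] [Ring A] [AddCommGroup M] [Module A M]
    (ι : A' → A) (e : A) : Prop :=
  ∃ (Q : Type) (_ : AddCommGroup Q) (_ : Module A' Q), Module.Projective A' Q ∧
    ∃ g : Q →+ M, Function.Injective g ∧
      Set.range g = Set.range (fun m : M => e • m) ∧
      ∀ (a : A') (q : Q), g (a • q) = ι a • g q

set_option linter.unusedSectionVars false

namespace StmtAux

open TrivSqZeroExt MulOpposite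

/-- projection onto the (1,1) corner, as a ring hom. -/
def p1 : TriRing A₁ A₂ W →+* A₁ where
  toFun x := x.fst.1
  map_one' := rfl
  map_mul' x y := by show ((x*y).fst).1 = _; rw [fst_mul]; rfl
  map_zero' := rfl
  map_add' x y := by show ((x+y).fst).1 = _; rw [fst_add]; rfl

/-- projection onto the (2,2) corner, as a ring hom. -/
def p2 : TriRing A₁ A₂ W →+* A₂ where
  toFun x := x.fst.2
  map_one' := rfl
  map_mul' x y := by show ((x*y).fst).2 = _; rw [fst_mul]; rfl
  map_zero' := rfl
  map_add' x y := by show ((x+y).fst).2 = _; rw [fst_add]; rfl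

variable {A₁ A₂ W}

@[simp] lemma smul0_def (p : A₁ × A₂) (w : W) : p • w = p.1 • w := rfl
@[simp] lemma smul0op_def (p : (A₁ × A₂)ᵐᵒᵖ) (w : W) : p • w = op p.unop.2 • w := rfl
@[simp] lemma p1_apply (x : TriRing A₁ A₂ W) : p1 A₁ A₂ W x = x.fst.1 := rfl
@[simp] lemma p2_apply (x : TriRing A₁ A₂ W) : p2 A₁ A₂ W x = x.fst.2 := rfl

lemma ext_ts (x y : TriRing A₁ A₂ W) (h1 : x.fst = y.fst) (h2 : x.snd = y.snd) : x = y := by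
  cases x; cases y; cases h1; cases h2; rfl

/-- (R1) -/
lemma mul_inl10 (x : TriRing A₁ A₂ W) (a : A₁) :
    x * inl (a, 0) = inl (p1 A₁ A₂ W x * a, 0) := by
  refine ext_ts _ _ ?_ ?_ <;>
    simp [fst_mul, snd_mul, Prod.ext_iff, Prod.mul_def]

/-- (R2) -/
lemma mul_inl02 (x : TriRing A₁ A₂ W) (b : A₂) :
    x * inl (0, b) = inl (0, p2 A₁ A₂ W x * b) + inr (op b • x.snd) := by
  refine ext_ts _ _ ?_ ?_ <;>
    simp [fst_mul, snd_mul, Prod.ext_iff, Prod.mul_def]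

/-- (R3) -/
lemma mul_inr (x : TriRing A₁ A₂ W) (w : W) :
    x * inr w = inr (p1 A₁ A₂ W x • w) := by
  refine ext_ts _ _ ?_ ?_ <;>
    simp [fst_mul, snd_mul, Prod.ext_iff, Prod.mul_def]

/-- (R4) -/
lemma inl10_mul_inr (a : A₁) (w : W) :
    (inl ((a : A₁), (0:A₂)) : TriRing A₁ A₂ W) * inr w = inr (a • w) := by
  rw [inl_mul_inr]; rfl

/-- (E8) -/
lemma inr_mul_inl02 (v : W) (b : A₂) :
    (inr v : TriRing A₁ A₂ W) * inl (0, b) = inr (op b • v) := by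
  rw [inr_mul_inl]; rfl

lemma mul_e1 (x : TriRing A₁ A₂ W) : x * e1 A₁ A₂ W = inl (p1 A₁ A₂ W x, 0) := by
  rw [e1, mul_inl10, mul_one]

lemma e2_mul_inl02 (b : A₂) :
    (e2 A₁ A₂ W) * inl (0, b) = inl (0, b) := by
  rw [e2, inl_mul_inl]; norm_num

lemma e2_mul_e1 : (e2 A₁ A₂ W) * e1 A₁ A₂ W = 0 := by
  rw [e2, e1, inl_mul_inl]
  norm_num
  rfl

lemma e2_mul_inr (w : W) : (e2 A₁ A₂ W) * inr w = 0 := by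
  rw [e2, inl_mul_inr]
  simp

lemma e1_mul_inr (w : W) : (e1 A₁ A₂ W) * inr w = inr w := by
  rw [e1, inl_mul_inr]
  simp

lemma e1_mul_inl10 (a : A₁) : (e1 A₁ A₂ W) * inl (a, 0) = inl (a, 0) := by
  rw [e1, inl_mul_inl]; norm_num

lemma e1_add_e2 : e1 A₁ A₂ W + e2 A₁ A₂ W = 1 := by
  rw [e1, e2, ← inl_add]
  norm_num
  rfl

lemma e2_sq : (e2 A₁ A₂ W) * e2 A₁ A₂ W = e2 A₁ A₂ W := e2_mul_inl02 1

lemma inl10_mul_e1 (a : A₁) :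
    (inl (a, 0) : TriRing A₁ A₂ W) * e1 A₁ A₂ W = inl (a, 0) := by
  rw [e1, inl_mul_inl]; norm_num

lemma e1_sq : (e1 A₁ A₂ W) * e1 A₁ A₂ W = e1 A₁ A₂ W := inl10_mul_e1 1


/-! ### The column module `E ≅ Ae₂`, modeled on `A₂ × W`. -/

def smulE (x : TriRing A₁ A₂ W) (e : A₂ × W) : A₂ × W :=
  (p2 A₁ A₂ W x * e.1, p1 A₁ A₂ W x • e.2 + op e.1 • x.snd)

lemma smulE_def (x : TriRing A₁ A₂ W) (e : A₂ × W) :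
    smulE x e = (p2 A₁ A₂ W x * e.1, p1 A₁ A₂ W x • e.2 + op e.1 • x.snd) := rfl

def Emod : Module (TriRing A₁ A₂ W) (A₂ × W) :=
  letI : SMul (TriRing A₁ A₂ W) (A₂ × W) := ⟨smulE⟩
  Module.ofMinimalAxioms
    (fun x e e' => by
      show smulE x (e + e') = smulE x e + smulE x e'
      simp only [smulE, Prod.fst_add, Prod.snd_add, Prod.mk_add_mk, Prod.mk.injEq]
      constructor
      · rw [mul_add]
      · rw [smul_add, op_add, add_smul]; abel)
    (fun x y e => by
      show smulE (x + y) e = smulE x e + smulE y e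
      simp only [smulE, map_add, snd_add, Prod.mk_add_mk, Prod.mk.injEq]
      constructor
      · rw [add_mul]
      · rw [add_smul, smul_add]; abel)
    (fun x y e => by
      show smulE (x * y) e = smulE x (smulE y e)
      refine Prod.ext ?_ ?_
      · simp [smulE, mul_assoc]
      · show p1 A₁ A₂ W (x*y) • e.2 + op e.1 • (x*y).snd = _
        rw [map_mul, snd_mul]
        simp only [smulE, smul0_def, smul0op_def, unop_op, p1_apply, p2_apply]
        rw [mul_smul, smul_add, smul_add, smul_comm ((x.fst).1) (op e.1), op_mul, mul_smul]
        abel)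
    (fun e => by
      show smulE 1 e = e
      simp [smulE])

def psiE (e : A₂ × W) : TriRing A₁ A₂ W := inl (0, e.1) + inr e.2

lemma psiE_zero : psiE ((0 : A₂ × W) : A₂ × W) = (0 : TriRing A₁ A₂ W) := by
  simp [psiE]; rfl

lemma psiE_add (e e' : A₂ × W) :
    psiE (e + e') = (psiE e + psiE e' : TriRing A₁ A₂ W) := by
  refine ext_ts _ _ ?_ ?_ <;>
    simp [psiE, Prod.ext_iff, snd_add, fst_add]

lemma psiE_smul (x : TriRing A₁ A₂ W) (e : A₂ × W) :
    psiE (smulE x e) = x * psiE e := by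
  rw [psiE, psiE, mul_add, mul_inl02, mul_inr]
  refine ext_ts _ _ ?_ ?_ <;>
    simp [smulE, Prod.ext_iff, snd_add, fst_add] <;> abel

lemma projE : @Module.Projective (TriRing A₁ A₂ W) _ (A₂ × W) _ (Emod) := by
  letI : Module (TriRing A₁ A₂ W) (A₂ × W) := Emod
  have hsmul : ∀ (x : TriRing A₁ A₂ W) (e : A₂ × W), x • e = smulE x e := fun _ _ => rfl
  refine Module.Projective.of_split (M := TriRing A₁ A₂ W)
    ⟨⟨psiE, psiE_add⟩, fun x e => by simp only [RingHom.id_apply]; rw [hsmul, psiE_smul, smul_eq_mul]⟩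
    ⟨⟨fun x => (p2 A₁ A₂ W x, x.snd), by intro x y; simp [Prod.ext_iff, snd_add]⟩, ?_⟩ ?_
  · intro x y
    simp only [RingHom.id_apply, smul_eq_mul, hsmul]
    refine Prod.ext ?_ ?_
    · simp [smulE]
    · show (x*y).snd = _
      rw [snd_mul]
      simp [smulE]
  · ext e <;> simp [psiE, snd_add]

/-- transfer of projectivity along the corner embedding `A₁ → A`:
a projective `A₁`-module with the `A`-action through `p1` is `A`-projective. -/
lemma proj_col1 (N : Type) [AddCommGroup N] [Module A₁ N] (h : Module.Projective A₁ N) :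
    @Module.Projective (TriRing A₁ A₂ W) _ N _
      (Module.compHom N (p1 A₁ A₂ W)) := by
  letI : Module (TriRing A₁ A₂ W) N := Module.compHom N (p1 A₁ A₂ W)
  have hsmul : ∀ (x : TriRing A₁ A₂ W) (n : N), x • n = p1 A₁ A₂ W x • n := fun _ _ => rfl
  obtain ⟨s, hs⟩ := h.out
  refine ⟨⟨⟨⟨fun n => (s n).mapRange (fun a => inl (a, 0)) (by rw [Prod.mk_zero_zero, inl_zero]), ?_⟩, ?_⟩, ?_⟩⟩
  · intro n n'
    show Finsupp.mapRange _ _ (s (n + n')) = _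
    rw [map_add]
    exact Finsupp.mapRange_add (by intro a b; rw [← inl_add, Prod.mk_add_mk, add_zero]) _ _
  · intro x n
    simp only [RingHom.id_apply]
    show Finsupp.mapRange _ _ (s (x • n)) = _
    rw [hsmul, map_smul]
    refine Finsupp.ext fun n' => ?_
    simp only [Finsupp.smul_apply, Finsupp.mapRange_apply, smul_eq_mul]
    rw [mul_inl10]
  · intro n
    simp only [LinearMap.coe_mk, AddHom.coe_mk]
    rw [Finsupp.linearCombination_apply, Finsupp.sum_mapRange_index (by simp)]
    have : ∀ (n' : N) (a : A₁), (inl ((a : A₁), (0:A₂)) : TriRing A₁ A₂ W) • n' = a • n' :=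
      fun n' a => by rw [hsmul]; rfl
    simp only [this]
    have := hs n
    rwa [Finsupp.linearCombination_apply] at this

/-- Finsupp of a projective module is projective. -/
lemma proj_finsupp (R N ι : Type) [Ring R] [AddCommGroup N] [Module R N]
    (h : Module.Projective R N) : Module.Projective R (ι →₀ N) := by
  classical
  haveI : ∀ i : ι, Module.Projective R N := fun _ => h
  exact Module.Projective.of_equiv (finsuppLequivDFinsupp (M := N) (ι := ι) R).symm


/-! ### The kernel module -/

section KSection

variable {Q₂ : Type} [AddCommGroup Q₂] [Module A₂ Q₂]

/-- `k ⊳ v`, the A₂-tensor-contraction of `k` against `v`. -/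
def bowtie (k : Q₂ →₀ A₂) (v : W) : Q₂ →₀ W :=
  k.mapRange (fun b => op b • v) (by simp)

@[simp] lemma bowtie_apply (k : Q₂ →₀ A₂) (v : W) (q : Q₂) :
    bowtie k v q = op (k q) • v := Finsupp.mapRange_apply

lemma bowtie_add_left (k k' : Q₂ →₀ A₂) (v : W) :
    bowtie (k + k') v = bowtie k v + bowtie k' v :=
  Finsupp.ext fun q => by simp [op_add, add_smul]

/-- bowtie in the first argument, as an additive map. -/
def bowtieL (v : W) : (Q₂ →₀ A₂) →+ (Q₂ →₀ W) :=
  AddMonoidHom.mk' (fun k => bowtie k v) (fun k k' => bowtie_add_left k k' v)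

lemma bowtie_add_right (k : Q₂ →₀ A₂) (v v' : W) :
    bowtie k (v + v') = bowtie k v + bowtie k v' :=
  Finsupp.ext fun q => by simp [smul_add]

@[simp] lemma bowtie_zero_left (v : W) : bowtie (0 : Q₂ →₀ A₂) v = 0 :=
  Finsupp.ext fun q => by simp

@[simp] lemma bowtie_zero_right (k : Q₂ →₀ A₂) : bowtie k (0 : W) = 0 :=
  Finsupp.ext fun q => by simp

lemma bowtie_op_smul (k : Q₂ →₀ A₂) (b : A₂) (v : W) :
    bowtie k (op b • v) = bowtie (b • k) v :=
  Finsupp.ext fun q => by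
    simp only [bowtie_apply, Finsupp.smul_apply, smul_eq_mul, ← mul_smul, ← op_mul]

lemma bowtie_smul_right (k : Q₂ →₀ A₂) (a : A₁) (v : W) :
    bowtie k (a • v) = a • bowtie k v :=
  Finsupp.ext fun q => by
    simp only [bowtie_apply, Finsupp.smul_apply]
    exact (smul_comm a (op (k q)) v).symm

/-- the linearCombination map `Q₂ →₀ A₂ → Q₂`. -/
def tQ : (Q₂ →₀ A₂) →ₗ[A₂] Q₂ := Finsupp.linearCombination A₂ id

/-- lift of an `A₂`-endomorphism of `Q₂ →₀ A₂` to `Q₂ →₀ W` (tensoring with `W` on the left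
over `A₂`). -/
def liftW (φ : (Q₂ →₀ A₂) →ₗ[A₂] (Q₂ →₀ A₂)) (f : Q₂ →₀ W) : Q₂ →₀ W :=
  f.sum fun q w => bowtie (φ (Finsupp.single q 1)) w

lemma liftW_add (φ : (Q₂ →₀ A₂) →ₗ[A₂] (Q₂ →₀ A₂)) (f f' : Q₂ →₀ W) :
    liftW φ (f + f') = liftW φ f + liftW φ f' :=
  Finsupp.sum_add_index' (fun q => bowtie_zero_right _) (fun q => bowtie_add_right _)

/-- `liftW` as an additive map. -/
def liftWHom (φ : (Q₂ →₀ A₂) →ₗ[A₂] (Q₂ →₀ A₂)) : (Q₂ →₀ W) →+ (Q₂ →₀ W) :=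
  AddMonoidHom.mk' (liftW φ) (liftW_add φ)

lemma liftW_smul (φ : (Q₂ →₀ A₂) →ₗ[A₂] (Q₂ →₀ A₂)) (a : A₁) (f : Q₂ →₀ W) :
    liftW φ (a • f) = a • liftW φ f := by
  rw [liftW, liftW, Finsupp.sum_smul_index' (fun q => bowtie_zero_right _), Finsupp.smul_sum]
  exact Finsupp.sum_congr fun q _ => bowtie_smul_right _ _ _

lemma liftW_bowtie (φ : (Q₂ →₀ A₂) →ₗ[A₂] (Q₂ →₀ A₂)) (k : Q₂ →₀ A₂) (v : W) :
    liftW φ (bowtie k v) = bowtie (φ k) v := by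
  induction k using Finsupp.induction_linear with
  | zero => simp [liftW]
  | add f g hf hg =>
      rw [bowtie_add_left, liftW_add, hf, hg, map_add, bowtie_add_left]
  | single a b =>
      rw [bowtie, Finsupp.mapRange_single, liftW]
      rw [Finsupp.sum_single_index]
      · rw [bowtie_op_smul, ← map_smul, Finsupp.smul_single' b a 1, mul_one]
      · exact bowtie_zero_right _

/-- glue a `Q₂ →₀ A₂` and a `Q₂ →₀ W` into a `Q₂ →₀ A₂ × W`. -/
def combine (k : Q₂ →₀ A₂) (f : Q₂ →₀ W) : Q₂ →₀ (A₂ × W) :=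
  k.mapRange (fun b => ((b : A₂), (0 : W))) rfl + f.mapRange (fun w => ((0 : A₂), w)) rfl

@[simp] lemma combine_apply (k : Q₂ →₀ A₂) (f : Q₂ →₀ W) (q : Q₂) :
    combine k f q = (k q, f q) := by
  simp [combine, Finsupp.mapRange_apply, Prod.ext_iff]

/-- the action of the triangular ring on `ker tQ × (Q₂ →₀ W)`. -/
def smulK (x : TriRing A₁ A₂ W)
    (kf : ↥(LinearMap.ker (tQ (A₂ := A₂) (Q₂ := Q₂))) × (Q₂ →₀ W)) :
    ↥(LinearMap.ker (tQ (A₂ := A₂) (Q₂ := Q₂))) × (Q₂ →₀ W) :=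
  (p2 A₁ A₂ W x • kf.1, p1 A₁ A₂ W x • kf.2 + bowtie (kf.1 : Q₂ →₀ A₂) x.snd)

def Kmod : Module (TriRing A₁ A₂ W) (↥(LinearMap.ker (tQ (A₂ := A₂) (Q₂ := Q₂))) × (Q₂ →₀ W)) :=
  letI : SMul (TriRing A₁ A₂ W) (↥(LinearMap.ker (tQ (A₂ := A₂) (Q₂ := Q₂))) × (Q₂ →₀ W)) := ⟨smulK⟩
  Module.ofMinimalAxioms (R := TriRing A₁ A₂ W)
    (M := ↥(LinearMap.ker (tQ (A₂ := A₂) (Q₂ := Q₂))) × (Q₂ →₀ W))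
    (fun x kf kf' => by
      show smulK x (kf + kf') = smulK x kf + smulK x kf'
      simp only [smulK, Prod.fst_add, Prod.snd_add, Submodule.coe_add, Prod.mk_add_mk,
        Prod.mk.injEq]
      constructor
      · rw [smul_add]
      · rw [smul_add, bowtie_add_left]; abel)
    (fun x y kf => by
      show smulK (x + y) kf = smulK x kf + smulK y kf
      simp only [smulK, map_add, snd_add, Prod.mk_add_mk, Prod.mk.injEq]
      constructor
      · rw [add_smul]
      · rw [add_smul, bowtie_add_right]; abel)
    (fun x y kf => by
      show smulK (x * y) kf = smulK x (smulK y kf)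
      simp only [smulK, map_mul, Prod.mk.injEq, SetLike.val_smul]
      constructor
      · rw [mul_smul]
      · rw [snd_mul, mul_smul, smul_add, bowtie_add_right]
        refine Finsupp.ext fun q => ?_
        simp only [Finsupp.add_apply, Finsupp.smul_apply, bowtie_apply, smul0_def, smul0op_def,
          unop_op, p1_apply, p2_apply, smul_eq_mul, op_mul, mul_smul]
        rw [smul_comm ((x.fst).1) (op ((kf.1 : Q₂ →₀ A₂) q)) (snd y)]
        abel)
    (fun kf => by
      show smulK 1 kf = kf
      simp only [smulK, map_one, one_smul]
      refine Prod.ext rfl ?_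
      show kf.2 + bowtie _ (1 : TriRing A₁ A₂ W).snd = kf.2
      have h1 : (1 : TriRing A₁ A₂ W).snd = 0 := rfl
      rw [h1, bowtie_zero_right, add_zero])



def kOf (h : Q₂ →₀ (A₂ × W)) : Q₂ →₀ A₂ := h.mapRange Prod.fst rfl
def fOf (h : Q₂ →₀ (A₂ × W)) : Q₂ →₀ W := h.mapRange Prod.snd rfl

@[simp] lemma kOf_apply (h : Q₂ →₀ (A₂ × W)) (q : Q₂) : kOf h q = (h q).1 :=
  Finsupp.mapRange_apply
@[simp] lemma fOf_apply (h : Q₂ →₀ (A₂ × W)) (q : Q₂) : fOf h q = (h q).2 :=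
  Finsupp.mapRange_apply

lemma kOf_add (h h' : Q₂ →₀ (A₂ × W)) : kOf (h + h') = kOf h + kOf h' :=
  Finsupp.ext fun q => by simp
lemma fOf_add (h h' : Q₂ →₀ (A₂ × W)) : fOf (h + h') = fOf h + fOf h' :=
  Finsupp.ext fun q => by simp

@[simp] lemma bowtieL_apply (v : W) (k : Q₂ →₀ A₂) : bowtieL v k = bowtie k v := rfl

set_option maxHeartbeats 1000000 in
set_option synthInstance.maxHeartbeats 400000 in
theorem Kproj (hW : Module.Projective A₁ W)
    (s : Q₂ →ₗ[A₂] (Q₂ →₀ A₂)) (hs : ∀ q, tQ (s q) = q) :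
    @Module.Projective (TriRing A₁ A₂ W) _
      (↥(LinearMap.ker (tQ (A₂ := A₂) (Q₂ := Q₂))) × (Q₂ →₀ W)) _ (Kmod) := by
  classical
  letI : Module (TriRing A₁ A₂ W)
      (↥(LinearMap.ker (tQ (A₂ := A₂) (Q₂ := Q₂))) × (Q₂ →₀ W)) := Kmod
  have hsmulK : ∀ (x : TriRing A₁ A₂ W)
      (kf : ↥(LinearMap.ker (tQ (A₂ := A₂) (Q₂ := Q₂))) × (Q₂ →₀ W)),
      x • kf = smulK x kf := fun _ _ => rfl
  set p : (Q₂ →₀ A₂) →ₗ[A₂] (Q₂ →₀ A₂) := s ∘ₗ tQ with hp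
  letI mW : Module (TriRing A₁ A₂ W) (Q₂ →₀ W) := Module.compHom (Q₂ →₀ W) (p1 A₁ A₂ W)
  letI mE : Module (TriRing A₁ A₂ W) (A₂ × W) := Emod
  have hsmulW : ∀ (x : TriRing A₁ A₂ W) (f : Q₂ →₀ W), x • f = p1 A₁ A₂ W x • f :=
    fun _ _ => rfl
  haveI hG1 : Module.Projective (TriRing A₁ A₂ W) (Q₂ →₀ W) :=
    proj_col1 _ (proj_finsupp A₁ W Q₂ hW)
  haveI hG2 : Module.Projective (TriRing A₁ A₂ W) (Q₂ →₀ (A₂ × W)) :=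
    proj_finsupp _ _ _ projE
  have hpk : ∀ k : ↥(LinearMap.ker (tQ (A₂ := A₂) (Q₂ := Q₂))), p k.val = 0 := by
    intro k
    have : tQ k.val = 0 := k.2
    simp [hp, this]
  have hsmulE : ∀ (x : TriRing A₁ A₂ W) (e : A₂ × W), x • e = smulE x e := fun _ _ => rfl
  -- the split injection
  refine Module.Projective.of_split
    (M := (Q₂ →₀ W) × (Q₂ →₀ (A₂ × W)))
    (⟨⟨fun kf => (liftW p kf.2, combine kf.1.val kf.2), ?_⟩, ?_⟩)
    (⟨⟨fun gh => (⟨kOf gh.2 - p (kOf gh.2), by simp [hp, hs]⟩,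
        fOf gh.2 - liftW p (fOf gh.2) + gh.1), ?_⟩, ?_⟩) ?_
  · -- Θ additive
    intro kf kf'
    refine Prod.ext ?_ ?_
    · show liftW p (kf.2 + kf'.2) = liftW p kf.2 + liftW p kf'.2
      exact liftW_add _ _ _
    · show combine (kf.1.val + kf'.1.val) (kf.2 + kf'.2) = _
      refine Finsupp.ext fun q => ?_
      simp [Prod.ext_iff]
  · -- Θ linear
    intro x kf
    simp only [RingHom.id_apply]
    rw [hsmulK]
    refine Prod.ext ?_ ?_
    · show liftW p (p1 A₁ A₂ W x • kf.2 + bowtie kf.1.val x.snd) = (x • _ : _ × _).1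
      rw [liftW_add, liftW_smul, liftW_bowtie, hpk, bowtie_zero_left, add_zero]
      rfl
    · show combine ((p2 A₁ A₂ W x • kf.1 : ↥(LinearMap.ker tQ)) : Q₂ →₀ A₂)
          (p1 A₁ A₂ W x • kf.2 + bowtie kf.1.val x.snd) = (x • _ : _ × _).2
      refine Finsupp.ext fun q => ?_
      show _ = (x • combine kf.1.val kf.2) q
      rw [Finsupp.smul_apply, hsmulE]
      simp [smulE, Prod.ext_iff]
  · -- ρ additive
    intro gh gh'
    refine Prod.ext ?_ ?_
    · refine Subtype.ext ?_
      show kOf (gh.2 + gh'.2) - p (kOf (gh.2 + gh'.2)) = _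
      rw [kOf_add, map_add]
      rw [Prod.fst_add, Submodule.coe_add]
      show _ = (kOf gh.2 - p (kOf gh.2)) + (kOf gh'.2 - p (kOf gh'.2))
      abel
    · show fOf (gh.2 + gh'.2) - liftW p (fOf (gh.2 + gh'.2)) + (gh.1 + gh'.1) = _
      rw [fOf_add, liftW_add]
      show _ = fOf gh.2 - liftW p (fOf gh.2) + gh.1 + (fOf gh'.2 - liftW p (fOf gh'.2) + gh'.1)
      abel
  · -- ρ linear
    intro x gh
    simp only [RingHom.id_apply]
    have hx2 : (x • gh : _ × _).2 = x • gh.2 := rfl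
    have hx1 : (x • gh : _ × _).1 = p1 A₁ A₂ W x • gh.1 := rfl
    have hk : kOf (x • gh.2) = p2 A₁ A₂ W x • kOf gh.2 := by
      refine Finsupp.ext fun q => ?_
      rw [kOf_apply, Finsupp.smul_apply, hsmulE, Finsupp.smul_apply]
      simp [smulE]
    have hf : fOf (x • gh.2) = p1 A₁ A₂ W x • fOf gh.2 + bowtie (kOf gh.2) x.snd := by
      refine Finsupp.ext fun q => ?_
      rw [Finsupp.add_apply, fOf_apply, Finsupp.smul_apply, hsmulE, Finsupp.smul_apply,
        bowtie_apply, kOf_apply]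
      simp [smulE]
    rw [hsmulK]
    refine Prod.ext ?_ ?_
    · refine Subtype.ext ?_
      show kOf ((x • gh : _ × _).2) - p (kOf ((x • gh : _ × _).2)) = _
      rw [hx2, hk, map_smul]
      show _ = p2 A₁ A₂ W x • (kOf gh.2 - p (kOf gh.2))
      rw [smul_sub]
    · show fOf ((x • gh : _ × _).2) - liftW p (fOf ((x • gh : _ × _).2)) + (x • gh : _ × _).1 =
        p1 A₁ A₂ W x • (fOf gh.2 - liftW p (fOf gh.2) + gh.1) +
          bowtie ((⟨kOf gh.2 - p (kOf gh.2), by simp [hp, hs]⟩ : ↥(LinearMap.ker tQ)) : Q₂ →₀ A₂)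
            x.snd
    -- expand
      rw [hx2, hx1, hf, liftW_add, liftW_smul, liftW_bowtie]
      show _ = (p1 A₁ A₂ W) x • (fOf gh.2 - liftW p (fOf gh.2) + gh.1) +
        bowtie (kOf gh.2 - p (kOf gh.2)) (snd x)
      have hsub : bowtie (kOf gh.2 - p (kOf gh.2)) x.snd
          = bowtie (kOf gh.2) x.snd - bowtie (p (kOf gh.2)) x.snd := by
        have := map_sub (bowtieL (Q₂ := Q₂) x.snd) (kOf gh.2) (p (kOf gh.2))
        simpa using this
      rw [hsub, smul_add, smul_sub]
      abel
  · -- retraction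
    refine LinearMap.ext fun kf => ?_
    simp only [LinearMap.coe_comp, LinearMap.coe_mk, AddHom.coe_mk, Function.comp_apply,
      LinearMap.id_apply]
    have hk : kOf (combine kf.1.val kf.2) = kf.1.val := Finsupp.ext fun q => by simp
    have hf : fOf (combine kf.1.val kf.2) = kf.2 := Finsupp.ext fun q => by simp
    refine Prod.ext ?_ ?_
    · refine Subtype.ext ?_
      show kOf (combine kf.1.val kf.2) - p (kOf (combine kf.1.val kf.2)) = kf.1.val
      rw [hk, hpk, sub_zero]
    · show fOf (combine kf.1.val kf.2) - liftW p (fOf (combine kf.1.val kf.2)) + liftW p kf.2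
        = kf.2
      rw [hf, sub_add_cancel]

end KSection

end StmtAux


open StmtAux TrivSqZeroExt MulOpposite

set_option maxHeartbeats 2000000
set_option synthInstance.maxHeartbeats 400000

/-- if `W` is finitely generated and projective as a left `A₁`-module and `M`
is a left module over the triangular matrix ring `A = A₁[W]A₂` such that `e₁M` is a
projective `A₁`-module and `e₂M` is a projective `A₂`-module, then `M` has projective
dimension at most `1`: there is a projective resolution `0 → Q → P → M → 0`. -/
theorem stmt0
    (hWfg : Module.Finite A₁ W) (hWproj : Module.Projective A₁ W)
    (M : Type) [AddCommGroup M] [Module (TriRing A₁ A₂ W) M]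
    (h1 : CornerProjective A₁ (TriRing A₁ A₂ W) M
      (fun a => TrivSqZeroExt.inl (a, (0 : A₂))) (e1 A₁ A₂ W))
    (h2 : CornerProjective A₂ (TriRing A₁ A₂ W) M
      (fun a => TrivSqZeroExt.inl ((0 : A₁), a)) (e2 A₁ A₂ W)) :
    ∃ (P Q : Type) (_ : AddCommGroup P) (_ : Module (TriRing A₁ A₂ W) P)
      (_ : AddCommGroup Q) (_ : Module (TriRing A₁ A₂ W) Q),
      Module.Projective (TriRing A₁ A₂ W) P ∧ Module.Projective (TriRing A₁ A₂ W) Q ∧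
      ∃ (f : Q →ₗ[TriRing A₁ A₂ W] P) (g : P →ₗ[TriRing A₁ A₂ W] M),
        Function.Injective f ∧ Function.Surjective g ∧
        LinearMap.range f = LinearMap.ker g := by
  classical
  obtain ⟨Q₁, iQ₁g, iQ₁m, hQ₁proj, g₁, hg₁inj, hg₁range, hg₁smul⟩ := h1
  obtain ⟨Q₂, iQ₂g, iQ₂m, hQ₂proj, g₂, hg₂inj, hg₂range, hg₂smul⟩ := h2
  letI := iQ₁g; letI := iQ₁m; letI := iQ₂g; letI := iQ₂m
  letI mE : Module (TriRing A₁ A₂ W) (A₂ × W) := Emod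
  letI mQ₁ : Module (TriRing A₁ A₂ W) Q₁ := Module.compHom Q₁ (p1 A₁ A₂ W)
  letI mK : Module (TriRing A₁ A₂ W)
      (↥(LinearMap.ker (tQ (A₂ := A₂) (Q₂ := Q₂))) × (Q₂ →₀ W)) := Kmod
  have hsmulE : ∀ (x : TriRing A₁ A₂ W) (e : A₂ × W), x • e = smulE x e := fun _ _ => rfl
  have hsmulQ₁ : ∀ (x : TriRing A₁ A₂ W) (q : Q₁), x • q = p1 A₁ A₂ W x • q := fun _ _ => rfl
  have hsmulK : ∀ (x : TriRing A₁ A₂ W)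
      (kf : ↥(LinearMap.ker (tQ (A₂ := A₂) (Q₂ := Q₂))) × (Q₂ →₀ W)),
      x • kf = smulK x kf := fun _ _ => rfl
  -- transported range facts
  have hg₁mem : ∀ q : Q₁, ∃ m : M, e1 A₁ A₂ W • m = g₁ q := by
    intro q
    have : g₁ q ∈ Set.range (fun m : M => e1 A₁ A₂ W • m) := by
      rw [← hg₁range]; exact ⟨q, rfl⟩
    exact this
  have hg₂mem : ∀ q : Q₂, ∃ m : M, e2 A₁ A₂ W • m = g₂ q := by
    intro q
    have : g₂ q ∈ Set.range (fun m : M => e2 A₁ A₂ W • m) := by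
      rw [← hg₂range]; exact ⟨q, rfl⟩
    exact this
  have hxg₁ : ∀ (x : TriRing A₁ A₂ W) (q : Q₁),
      x • g₁ q = (inl (p1 A₁ A₂ W x, 0) : TriRing A₁ A₂ W) • g₁ q := by
    intro x q
    obtain ⟨m, hm⟩ := hg₁mem q
    rw [← hm, ← mul_smul, ← mul_smul, mul_e1, inl10_mul_e1]
  have he2g₁ : ∀ q : Q₁, e2 A₁ A₂ W • g₁ q = 0 := by
    intro q
    obtain ⟨m, hm⟩ := hg₁mem q
    rw [← hm, ← mul_smul, e2_mul_e1, zero_smul]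
  have he1inr : ∀ (w : W) (m' : M),
      e1 A₁ A₂ W • ((inr w : TriRing A₁ A₂ W) • m') = (inr w : TriRing A₁ A₂ W) • m' := by
    intro w m'; rw [← mul_smul, e1_mul_inr]
  have he2inr : ∀ (w : W) (m' : M),
      e2 A₁ A₂ W • ((inr w : TriRing A₁ A₂ W) • m') = 0 := by
    intro w m'; rw [← mul_smul, e2_mul_inr, zero_smul]
  have he2inl : ∀ (b : A₂) (m' : M),
      e2 A₁ A₂ W • ((inl (0, b) : TriRing A₁ A₂ W) • m')
        = (inl (0, b) : TriRing A₁ A₂ W) • m' := by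
    intro b m'; rw [← mul_smul, e2_mul_inl02]
  -- the `u` map
  set u : (Q₂ →₀ W) → M :=
    fun fW => -(fW.sum fun q w => (inr w : TriRing A₁ A₂ W) • g₂ q) with hu
  have hinr0 : ∀ q : Q₂, (inr (0 : W) : TriRing A₁ A₂ W) • g₂ q = 0 := by
    intro q; rw [inr_zero, zero_smul]
  have hu_add : ∀ f f', u (f + f') = u f + u f' := by
    intro f f'
    rw [hu]; dsimp only
    rw [Finsupp.sum_add_index' (fun q => hinr0 q)
      (fun q w w' => by rw [inr_add, add_smul])]
    abel
  have hu_smul : ∀ (a : A₁) (f : Q₂ →₀ W),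
      u (a • f) = (inl (a, 0) : TriRing A₁ A₂ W) • u f := by
    intro a f
    rw [hu]; dsimp only
    have hx : (a • f) = f.mapRange (fun w => a • w) (smul_zero a) :=
      Finsupp.ext fun q => by rw [Finsupp.mapRange_apply, Finsupp.smul_apply]
    rw [hx, Finsupp.sum_mapRange_index (fun q => hinr0 q), smul_neg, Finsupp.smul_sum]
    congr 1
    exact Finsupp.sum_congr fun q _ => by rw [← mul_smul, inl10_mul_inr]
  have hsum_eq_t : ∀ k : Q₂ →₀ A₂, (k.sum fun q b => b • q) = tQ k := by
    intro k
    rw [tQ, Finsupp.linearCombination_apply]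
    rfl
  have hu_bowtie : ∀ (k : Q₂ →₀ A₂), tQ k = 0 → ∀ v : W, u (bowtie k v) = 0 := by
    intro k hk v
    rw [hu]; dsimp only
    rw [bowtie, Finsupp.sum_mapRange_index (fun q => hinr0 q)]
    have : (k.sum fun q b => (inr (op b • v) : TriRing A₁ A₂ W) • g₂ q)
        = k.sum fun q b => (inr v : TriRing A₁ A₂ W) • g₂ (b • q) :=
      Finsupp.sum_congr fun q _ => by rw [hg₂smul, ← mul_smul, inr_mul_inl02]
    rw [this, ← Finsupp.smul_sum, ← map_finsuppSum g₂, hsum_eq_t, hk, map_zero, smul_zero,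
      neg_zero]
  have hue1 : ∀ f, e1 A₁ A₂ W • u f = u f := by
    intro f
    rw [hu]; dsimp only
    rw [smul_neg, Finsupp.smul_sum]
    congr 1
    exact Finsupp.sum_congr fun q _ => he1inr _ _
  have hurange : ∀ f, u f ∈ Set.range g₁ := by
    intro f
    rw [hg₁range]
    exact ⟨u f, hue1 f⟩
  set qof : (Q₂ →₀ W) → Q₁ := fun f => (hurange f).choose with hqof'
  have hqof : ∀ f, g₁ (qof f) = u f := fun f => (hurange f).choose_spec
  -- the SB map
  set SB : (Q₂ →₀ (A₂ × W)) → M :=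
    fun f => f.sum fun q e => (psiE e : TriRing A₁ A₂ W) • g₂ q with hSBdef
  have hSB0 : ∀ q : Q₂, (psiE (0 : A₂ × W) : TriRing A₁ A₂ W) • g₂ q = 0 := fun q => by
    rw [psiE_zero, zero_smul]
  have hSB_add : ∀ f f', SB (f + f') = SB f + SB f' := fun f f' =>
    Finsupp.sum_add_index' (fun q => hSB0 q) (fun q e e' => by rw [psiE_add, add_smul])
  have hpsiE10 : psiE ((1, 0) : A₂ × W) = (e2 A₁ A₂ W : TriRing A₁ A₂ W) := by
    rw [psiE]; dsimp only
    rw [inr_zero, add_zero, e2]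
  have hpsiEb : ∀ b : A₂, psiE ((b, 0) : A₂ × W) = (inl (0, b) : TriRing A₁ A₂ W) := by
    intro b
    rw [psiE]; dsimp only
    rw [inr_zero, add_zero]
  have hpsiEw : ∀ w : W, psiE ((0, w) : A₂ × W) = (inr w : TriRing A₁ A₂ W) := by
    intro w
    rw [psiE]; dsimp only
    rw [show ((0 : A₁), (0 : A₂)) = (0 : A₁ × A₂) from rfl, inl_zero, zero_add]
  have hSB_split : ∀ (k : Q₂ →₀ A₂) (fW : Q₂ →₀ W),
      SB (combine k fW)
        = (k.sum fun q b => (inl (0, b) : TriRing A₁ A₂ W) • g₂ q)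
          + (fW.sum fun q w => (inr w : TriRing A₁ A₂ W) • g₂ q) := by
    intro k fW
    rw [hSBdef]; dsimp only
    rw [combine, Finsupp.sum_add_index' (fun q => hSB0 q)
      (fun q e e' => by rw [psiE_add, add_smul])]
    congr 1
    · rw [Finsupp.sum_mapRange_index (fun q => hSB0 q)]
      exact Finsupp.sum_congr fun q _ => by rw [hpsiEb]
    · rw [Finsupp.sum_mapRange_index (fun q => hSB0 q)]
      exact Finsupp.sum_congr fun q _ => by rw [hpsiEw]
  have hSBb : ∀ k : Q₂ →₀ A₂,
      (k.sum fun q b => (inl (0, b) : TriRing A₁ A₂ W) • g₂ q) = g₂ (tQ k) := by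
    intro k
    have h1 : (k.sum fun q b => (inl (0, b) : TriRing A₁ A₂ W) • g₂ q)
        = k.sum fun q b => g₂ (b • q) :=
      Finsupp.sum_congr fun q _ => (hg₂smul _ _).symm
    rw [h1, ← map_finsuppSum g₂, hsum_eq_t]
  -- the covering map gP
  set gP : (Q₁ × (Q₂ →₀ (A₂ × W))) →ₗ[TriRing A₁ A₂ W] M :=
    { toFun := fun qf => g₁ qf.1 + SB qf.2
      map_add' := fun qf qf' => by
        show g₁ (qf.1 + qf'.1) + SB (qf.2 + qf'.2) = _
        rw [map_add, hSB_add]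
        abel
      map_smul' := fun x qf => by
        simp only [RingHom.id_apply]
        show g₁ (x • qf.1) + SB (x • qf.2) = x • (g₁ qf.1 + SB qf.2)
        have hSBsmul : SB (x • qf.2) = x • SB qf.2 := by
          rw [hSBdef]; dsimp only
          have hx : (x • qf.2) = qf.2.mapRange (fun e => smulE x e)
              (by show smulE x 0 = 0; rw [← hsmulE]; exact smul_zero x) :=
            Finsupp.ext fun q => by rw [Finsupp.mapRange_apply, Finsupp.smul_apply, hsmulE]
          rw [hx, Finsupp.sum_mapRange_index (fun q => hSB0 q), Finsupp.smul_sum]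
          exact Finsupp.sum_congr fun q _ => by rw [psiE_smul, mul_smul]
        rw [hSBsmul, smul_add, hsmulQ₁, hg₁smul, ← hxg₁] } with hgPdef
  have hgP_apply : ∀ qf : Q₁ × (Q₂ →₀ (A₂ × W)), gP qf = g₁ qf.1 + SB qf.2 :=
    fun qf => rfl
  -- surjectivity
  have hgPsurj : Function.Surjective gP := by
    intro m
    have h1m : (e1 A₁ A₂ W • m) ∈ Set.range g₁ := by rw [hg₁range]; exact ⟨m, rfl⟩
    have h2m : (e2 A₁ A₂ W • m) ∈ Set.range g₂ := by rw [hg₂range]; exact ⟨m, rfl⟩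
    obtain ⟨q1, hq1⟩ := h1m
    obtain ⟨q2, hq2⟩ := h2m
    refine ⟨(q1, Finsupp.single q2 ((1 : A₂), (0 : W))), ?_⟩
    rw [hgP_apply]; dsimp only
    rw [hSBdef]; dsimp only
    rw [Finsupp.sum_single_index (hSB0 q2), hpsiE10, hq1, hq2, ← mul_smul, e2_sq,
      ← add_smul, e1_add_e2, one_smul]
  -- the inclusion of the kernel
  set ι : (↥(LinearMap.ker (tQ (A₂ := A₂) (Q₂ := Q₂))) × (Q₂ →₀ W))
      →ₗ[TriRing A₁ A₂ W] (Q₁ × (Q₂ →₀ (A₂ × W))) :=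
    { toFun := fun kf => (qof kf.2, combine kf.1.val kf.2)
      map_add' := fun kf kf' => by
        refine Prod.ext ?_ ?_
        · show qof (kf.2 + kf'.2) = qof kf.2 + qof kf'.2
          apply hg₁inj
          rw [map_add, hqof, hqof, hqof, hu_add]
        · show combine (kf.1.val + kf'.1.val) (kf.2 + kf'.2) = _
          refine Finsupp.ext fun q => ?_
          simp [Prod.ext_iff]
      map_smul' := fun x kf => by
        simp only [RingHom.id_apply]
        rw [hsmulK]
        refine Prod.ext ?_ ?_
        · show qof (p1 A₁ A₂ W x • kf.2 + bowtie kf.1.val x.snd) = (x • _ : _ × _).1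
          have hker : tQ kf.1.val = 0 := kf.1.2
          apply hg₁inj
          rw [hqof, hu_add, hu_smul, hu_bowtie _ hker, add_zero]
          show _ = g₁ (x • qof kf.2)
          rw [hsmulQ₁, hg₁smul, hqof]
        · show combine ((p2 A₁ A₂ W x • kf.1 : ↥(LinearMap.ker tQ)) : Q₂ →₀ A₂)
            (p1 A₁ A₂ W x • kf.2 + bowtie kf.1.val x.snd) = (x • _ : _ × _).2
          refine Finsupp.ext fun q => ?_
          show _ = (x • combine kf.1.val kf.2) q
          rw [Finsupp.smul_apply, hsmulE]
          simp [smulE, Prod.ext_iff] } with hιdef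
  have hι_apply : ∀ kf, ι kf = (qof kf.2, combine kf.1.val kf.2) := fun kf => rfl
  -- injectivity of ι
  have hιinj : Function.Injective ι := by
    intro a b hab
    rw [hι_apply, hι_apply] at hab
    have h2 := congrArg Prod.snd hab
    dsimp only at h2
    have hpt : ∀ q : Q₂, ((a.1.val q : A₂), a.2 q) = ((b.1.val q : A₂), b.2 q) := fun q => by
      have hq := congrArg (fun F : Q₂ →₀ (A₂ × W) => F q) h2
      simpa only [combine_apply] using hq
    have hk : a.1.val = b.1.val := Finsupp.ext fun q => congrArg Prod.fst (hpt q)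
    have hf : a.2 = b.2 := Finsupp.ext fun q => congrArg Prod.snd (hpt q)
    exact Prod.ext (Subtype.ext hk) hf
  -- range = kernel
  have hrange : LinearMap.range ι = LinearMap.ker gP := by
    apply le_antisymm
    · rintro m ⟨⟨k, fW⟩, rfl⟩
      rw [LinearMap.mem_ker, hι_apply, hgP_apply]
      dsimp only
      rw [hSB_split, hSBb, k.2, map_zero, hqof]
      rw [hu]; dsimp only
      abel
    · rintro ⟨q, f⟩ hqf
      rw [LinearMap.mem_ker, hgP_apply] at hqf
      dsimp only at hqf
      have hcf : combine (kOf f) (fOf f) = f := Finsupp.ext fun q' => by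
        simp [Prod.ext_iff]
      rw [← hcf, hSB_split, hSBb] at hqf
      -- apply e2
      have he2 : e2 A₁ A₂ W • (g₁ q + (g₂ (tQ (kOf f))
          + ((fOf f).sum fun q' w => (inr w : TriRing A₁ A₂ W) • g₂ q'))) = 0 := by
        rw [hqf, smul_zero]
      rw [smul_add, smul_add, he2g₁, zero_add, Finsupp.smul_sum] at he2
      have hsw : ((fOf f).sum fun q' w => e2 A₁ A₂ W • ((inr w : TriRing A₁ A₂ W) • g₂ q'))
          = 0 := by
        have heq : ((fOf f).sum fun q' w => e2 A₁ A₂ W • ((inr w : TriRing A₁ A₂ W) • g₂ q'))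
            = (fOf f).sum fun _ _ => (0 : M) :=
          Finsupp.sum_congr fun q' _ => he2inr _ _
        rw [heq, Finsupp.sum, Finset.sum_const_zero]
      have he2gt : e2 A₁ A₂ W • g₂ (tQ (kOf f)) = g₂ (tQ (kOf f)) := by
        obtain ⟨m, hm⟩ := hg₂mem (tQ (kOf f))
        rw [← hm, ← mul_smul, e2_sq]
      rw [hsw, add_zero, he2gt] at he2
      have hker : tQ (kOf f) = 0 := hg₂inj (by rw [he2, map_zero])
      have hg₁q : g₁ q = u (fOf f) := by
        rw [hker, map_zero, zero_add] at hqf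
        rw [hu]; dsimp only
        rw [eq_neg_iff_add_eq_zero]
        exact hqf
      refine ⟨(⟨kOf f, hker⟩, fOf f), ?_⟩
      rw [hι_apply]
      dsimp only
      refine Prod.ext ?_ ?_
      · show qof (fOf f) = q
        apply hg₁inj
        rw [hqof, hg₁q]
      · exact hcf
  -- projectivity of P
  haveI hP1 : Module.Projective (TriRing A₁ A₂ W) Q₁ := proj_col1 Q₁ hQ₁proj
  haveI hP2 : Module.Projective (TriRing A₁ A₂ W) (Q₂ →₀ (A₂ × W)) :=
    proj_finsupp _ _ _ projE
  have hPproj : Module.Projective (TriRing A₁ A₂ W) (Q₁ × (Q₂ →₀ (A₂ × W))) :=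
    inferInstance
  -- projectivity of the kernel module
  obtain ⟨s₂, hs₂⟩ := hQ₂proj.out
  have hKproj : Module.Projective (TriRing A₁ A₂ W)
      (↥(LinearMap.ker (tQ (A₂ := A₂) (Q₂ := Q₂))) × (Q₂ →₀ W)) :=
    Kproj hWproj s₂ (fun q => hs₂ q)
  exact ⟨Q₁ × (Q₂ →₀ (A₂ × W)),
    (↥(LinearMap.ker (tQ (A₂ := A₂) (Q₂ := Q₂))) × (Q₂ →₀ W)),
    inferInstance, inferInstance, inferInstance, mK,
    hPproj, hKproj, ι, gP, hιinj, hgPsurj, hrange⟩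
end
end

section
/- Let A₁ and A₂ be rings, W an (A₁,A₂)-bimodule finitely generated as a left A₁-module, and A = A₁[W]A₂ the triangular matrix ring. A left A-module M = (P₁, φ, P₂), where P₁ is a projective A₁-module, P₂ a projective A₂-module, and φ : W ⊗_{A₂} P₂ → P₁ the multiplication map, is a projective A-module if and only if φ is a split monomorphism of A₁-modules. -/
noncomputable section

variable (A₁ A₂ W : Type) [Ring A₁] [Ring A₂]
  [AddCommGroup W] [Module A₁ W] [Module A₂ᵐᵒᵖ W] [SMulCommClass A₁ A₂ᵐᵒᵖ W]

variable (P₂ : Type) [AddCommGroup P₂] [Module A₂ P₂]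

/-- The defining relations of the tensor product `W ⊗_{A₂} P₂`. -/
def wrel : Submodule ℤ (TensorProduct ℤ W P₂) :=
  Submodule.span ℤ {x | ∃ (a : A₂) (w : W) (p : P₂),
    x = (MulOpposite.op a • w) ⊗ₜ[ℤ] p - w ⊗ₜ[ℤ] (a • p)}

/-- The tensor product `W ⊗_{A₂} P₂` over the (possibly noncommutative) ring `A₂`. -/
abbrev WTensor := TensorProduct ℤ W P₂ ⧸ wrel A₂ W P₂

/-- The elementary tensor `w ⊗ p` in `W ⊗_{A₂} P₂`. -/
def wmk (w : W) (p : P₂) : WTensor A₂ W P₂ :=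
  Submodule.Quotient.mk (w ⊗ₜ[ℤ] p)

/-- Left multiplication by `a : A₁` on `W`, as a `ℤ`-linear map. -/
def smulW (a : A₁) : W →ₗ[ℤ] W where
  toFun := (a • ·)
  map_add' := smul_add a
  map_smul' z w := smul_comm a z w

/-- The left action of `a : A₁` on `W ⊗_{A₂} P₂` (through the left action on `W`). -/
def tau (a : A₁) : WTensor A₂ W P₂ →ₗ[ℤ] WTensor A₂ W P₂ :=
  Submodule.mapQ _ _ (LinearMap.rTensor P₂ (smulW A₁ W a)) (by
    rw [wrel, Submodule.span_le]
    rintro x ⟨b, w, p, rfl⟩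
    have : (LinearMap.rTensor P₂ (smulW A₁ W a))
        ((MulOpposite.op b • w) ⊗ₜ[ℤ] p - w ⊗ₜ[ℤ] (b • p))
        = (MulOpposite.op b • (a • w)) ⊗ₜ[ℤ] p - (a • w) ⊗ₜ[ℤ] (b • p) := by
      simp [smulW, smul_comm]
    rw [SetLike.mem_coe]
    refine Submodule.mem_comap.mpr ?_
    first
      | exact this ▸ Submodule.subset_span ⟨b, a • w, p, rfl⟩
      | (erw [this]; exact Submodule.subset_span ⟨b, a • w, p, rfl⟩)
      | (convert Submodule.subset_span ⟨b, a • w, p, rfl⟩ using 1))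

section Aux

open TrivSqZeroExt MulOpposite

variable {A₁ A₂ W P₂}

theorem wmk_add_left (w w' : W) (p : P₂) :
    wmk A₂ W P₂ (w + w') p = wmk A₂ W P₂ w p + wmk A₂ W P₂ w' p := by
  simp [wmk, TensorProduct.add_tmul]

theorem wmk_add_right (w : W) (p p' : P₂) :
    wmk A₂ W P₂ w (p + p') = wmk A₂ W P₂ w p + wmk A₂ W P₂ w p' := by
  simp [wmk, TensorProduct.tmul_add]

theorem wmk_zero_left (p : P₂) : wmk A₂ W P₂ 0 p = 0 := by
  simp [wmk]

theorem wmk_zero_right (w : W) : wmk A₂ W P₂ w 0 = 0 := by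
  simp [wmk]

theorem wmk_op (a : A₂) (w : W) (p : P₂) :
    wmk A₂ W P₂ (op a • w) p = wmk A₂ W P₂ w (a • p) := by
  rw [wmk, wmk, ← sub_eq_zero, ← Submodule.Quotient.mk_sub, Submodule.Quotient.mk_eq_zero]
  exact Submodule.subset_span ⟨a, w, p, rfl⟩

theorem tau_wmk (a : A₁) (w : W) (p : P₂) :
    tau A₁ A₂ W P₂ a (wmk A₂ W P₂ w p) = wmk A₂ W P₂ (a • w) p := by
  simp [tau, wmk, Submodule.mapQ_apply, smulW]
  rfl

/-- the elementary tensor, `ℤ`-linear in `w`. -/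
def wmkL (p : P₂) : W →ₗ[ℤ] WTensor A₂ W P₂ :=
  (wrel A₂ W P₂).mkQ ∘ₗ ((TensorProduct.mk ℤ W P₂).flip p)

@[simp] theorem wmkL_apply (p : P₂) (w : W) : wmkL p w = wmk A₂ W P₂ w p := rfl

/-- the elementary tensor, `ℤ`-linear in `p`. -/
def wmkR (w : W) : P₂ →ₗ[ℤ] WTensor A₂ W P₂ :=
  (wrel A₂ W P₂).mkQ ∘ₗ (TensorProduct.mk ℤ W P₂ w)

@[simp] theorem wmkR_apply (w : W) (p : P₂) : wmkR w p = wmk A₂ W P₂ w p := rfl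

theorem wt_ext {X : Type*} [AddCommGroup X]
    {f g : WTensor A₂ W P₂ →ₗ[ℤ] X}
    (h : ∀ w p, f (wmk A₂ W P₂ w p) = g (wmk A₂ W P₂ w p)) : f = g := by
  refine Submodule.linearMap_qext _ ?_
  exact TensorProduct.ext' h

theorem wt_induction (C : WTensor A₂ W P₂ → Prop) (h0 : C 0)
    (hmk : ∀ w p, C (wmk A₂ W P₂ w p))
    (hadd : ∀ x y, C x → C y → C (x + y)) : ∀ x, C x := by
  intro x
  obtain ⟨t, rfl⟩ := Submodule.Quotient.mk_surjective _ x
  induction t with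
  | zero => simpa using h0
  | tmul w p => exact hmk w p
  | add x y hx hy => rw [Submodule.Quotient.mk_add]; exact hadd _ _ hx hy

end Aux
set_option linter.unusedSectionVars false

section Aux2

open TrivSqZeroExt MulOpposite Finsupp

variable {A₁ A₂ W P₂}

@[simp] theorem pair_smul_W (a : A₁) (b : A₂) (w : W) :
    ((a, b) : A₁ × A₂) • w = a • w := rfl

@[simp] theorem pair_op_smul_W (a : A₁) (b : A₂) (w : W) :
    (op ((a, b) : A₁ × A₂)) • w = (op b) • w := rfl

variable (A₁ A₂ W P₂)
variable (P₁ : Type) [AddCommGroup P₁] [Module A₁ P₁]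

/-- coefficient map for `sig1`. -/
def c1 (q : P₁) : A₁ →ₗ[ℤ] ((P₁ × P₂) →₀ TriRing A₁ A₂ W) :=
  ((Finsupp.singleAddHom ((q, 0) : P₁ × P₂)).comp
    (AddMonoidHom.mk' (fun a : A₁ => (inl ((a, 0) : A₁ × A₂) : TriRing A₁ A₂ W))
      (fun a b => by
        show (inl ((a + b, 0) : A₁ × A₂) : TriRing A₁ A₂ W) = inl (a, 0) + inl (b, 0)
        rw [show ((a + b : A₁), (0 : A₂)) = (a, 0) + (b, 0) by simp]
        exact inl_add _ _ _))).toIntLinearMap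

/-- coefficient map for `sig2`. -/
def c2 (q : P₂) : A₂ →ₗ[ℤ] ((P₁ × P₂) →₀ TriRing A₁ A₂ W) :=
  ((Finsupp.singleAddHom ((0, q) : P₁ × P₂)).comp
    (AddMonoidHom.mk' (fun b : A₂ => (inl ((0, b) : A₁ × A₂) : TriRing A₁ A₂ W))
      (fun a b => by
        show (inl (((0 : A₁), a + b) : A₁ × A₂) : TriRing A₁ A₂ W) = inl (0, a) + inl (0, b)
        rw [show (((0 : A₁), a + b) : A₁ × A₂) = (0, a) + (0, b) by simp]
        exact inl_add _ _ _))).toIntLinearMap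

/-- coefficient map for `theta`. -/
def c3 (q : P₂) (w : W) : A₂ →ₗ[ℤ] ((P₁ × P₂) →₀ TriRing A₁ A₂ W) :=
  ((Finsupp.singleAddHom ((0, q) : P₁ × P₂)).comp
    (AddMonoidHom.mk' (fun a : A₂ => (inr (op a • w) : TriRing A₁ A₂ W))
      (fun a b => by
        show (inr (op (a + b) • w) : TriRing A₁ A₂ W) = inr (op a • w) + inr (op b • w)
        rw [show op (a + b) • w = op a • w + op b • w by rw [op_add, add_smul]]
        exact inr_add _ _ _))).toIntLinearMap

@[simp] theorem c1_apply (q : P₁) (a : A₁) :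
    c1 A₁ A₂ W P₂ P₁ q a = Finsupp.single ((q, 0) : P₁ × P₂) (inl ((a, 0) : A₁ × A₂)) := rfl

@[simp] theorem c2_apply (q : P₂) (b : A₂) :
    c2 A₁ A₂ W P₂ P₁ q b = Finsupp.single ((0, q) : P₁ × P₂) (inl (((0 : A₁), b) : A₁ × A₂)) := rfl

@[simp] theorem c3_apply (q : P₂) (w : W) (a : A₂) :
    c3 A₁ A₂ W P₂ P₁ q w a
      = Finsupp.single ((0, q) : P₁ × P₂) (inr (op a • w) : TriRing A₁ A₂ W) := rfl

def sig1 : (P₁ →₀ A₁) →ₗ[ℤ] ((P₁ × P₂) →₀ TriRing A₁ A₂ W) :=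
  Finsupp.lsum ℤ (fun q => c1 A₁ A₂ W P₂ P₁ q)

def sig2 : (P₂ →₀ A₂) →ₗ[ℤ] ((P₁ × P₂) →₀ TriRing A₁ A₂ W) :=
  Finsupp.lsum ℤ (fun q => c2 A₁ A₂ W P₂ P₁ q)

@[simp] theorem sig1_single (q : P₁) (a : A₁) :
    sig1 A₁ A₂ W P₂ P₁ (Finsupp.single q a)
      = Finsupp.single ((q, 0) : P₁ × P₂) (inl ((a, 0) : A₁ × A₂)) := by
  simp [sig1]
  exact Finsupp.sum_single_index (map_zero _)

@[simp] theorem sig2_single (q : P₂) (b : A₂) :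
    sig2 A₁ A₂ W P₂ P₁ (Finsupp.single q b)
      = Finsupp.single ((0, q) : P₁ × P₂) (inl (((0:A₁), b) : A₁ × A₂)) := by
  simp [sig2]
  exact Finsupp.sum_single_index (map_zero _)

variable (g₂ : P₂ →ₗ[A₂] (P₂ →₀ A₂))

/-- `theta` on elementary tensors, as a function of the second argument. -/
def thetaW (w : W) : P₂ →ₗ[ℤ] ((P₁ × P₂) →₀ TriRing A₁ A₂ W) :=
  (Finsupp.lsum ℤ (fun q => c3 A₁ A₂ W P₂ P₁ q w)) ∘ₗ g₂.toAddMonoidHom.toIntLinearMap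

theorem thetaW_apply (w : W) (p : P₂) :
    thetaW A₁ A₂ W P₂ P₁ g₂ w p
      = (g₂ p).sum (fun q a =>
          Finsupp.single ((0, q) : P₁ × P₂) (inr (op a • w) : TriRing A₁ A₂ W)) := by
  simp [thetaW, Finsupp.lsum_apply]
  rfl

/-- The bilinear map underlying `theta`. -/
def Bmap : W →ₗ[ℤ] P₂ →ₗ[ℤ] ((P₁ × P₂) →₀ TriRing A₁ A₂ W) :=
  (AddMonoidHom.mk' (fun w => thetaW A₁ A₂ W P₂ P₁ g₂ w) (fun w w' => by
    refine LinearMap.ext fun q => ?_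
    show thetaW A₁ A₂ W P₂ P₁ g₂ (w + w') q
      = thetaW A₁ A₂ W P₂ P₁ g₂ w q + thetaW A₁ A₂ W P₂ P₁ g₂ w' q
    rw [thetaW_apply, thetaW_apply, thetaW_apply, ← Finsupp.sum_add]
    refine Finsupp.sum_congr fun q' _ => ?_
    rw [show op _ • (w + w') = op _ • w + op _ • w' from smul_add _ _ _]
    rw [show (inr (op _ • w + op _ • w') : TriRing A₁ A₂ W)
      = inr (op _ • w) + inr (op _ • w') from inr_add _ _ _]
    rw [Finsupp.single_add])).toIntLinearMap

theorem Bmap_apply (w : W) (p : P₂) :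
    Bmap A₁ A₂ W P₂ P₁ g₂ w p = thetaW A₁ A₂ W P₂ P₁ g₂ w p := rfl

/-- The splitting data map `θ : W ⊗ P₂ → F`. -/
def theta : WTensor A₂ W P₂ →ₗ[ℤ] ((P₁ × P₂) →₀ TriRing A₁ A₂ W) :=
  Submodule.liftQ (wrel A₂ W P₂) (TensorProduct.lift (Bmap A₁ A₂ W P₂ P₁ g₂)) (by
    rw [wrel, Submodule.span_le]
    rintro x ⟨a, w, p, rfl⟩
    rw [SetLike.mem_coe]
    refine LinearMap.mem_ker.mpr ?_
    erw [map_sub]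
    erw [TensorProduct.lift.tmul, TensorProduct.lift.tmul]
    rw [Bmap_apply, Bmap_apply, thetaW_apply, thetaW_apply, sub_eq_zero]
    rw [map_smul]
    rw [Finsupp.sum_smul_index (fun i => by simp)]
    refine Finsupp.sum_congr fun q _ => ?_
    rw [← mul_smul, ← op_mul])

theorem theta_wmk (w : W) (p : P₂) :
    theta A₁ A₂ W P₂ P₁ g₂ (wmk A₂ W P₂ w p)
      = (g₂ p).sum (fun q a =>
          Finsupp.single ((0, q) : P₁ × P₂) (inr (op a • w) : TriRing A₁ A₂ W)) := by
  rw [theta, wmk]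
  erw [Submodule.liftQ_apply, TensorProduct.lift.tmul, Bmap_apply, thetaW_apply]

/-- The map `Ψ : F → W ⊗ P₂` reading off the `W`-components. -/
def psi : ((P₁ × P₂) →₀ TriRing A₁ A₂ W) →ₗ[ℤ] WTensor A₂ W P₂ :=
  Finsupp.lsum ℤ (fun m : P₁ × P₂ =>
    (wmkL (m.2) : W →ₗ[ℤ] WTensor A₂ W P₂) ∘ₗ
      ((sndHom (A₁ × A₂) W).toAddMonoidHom.toIntLinearMap))

@[simp] theorem psi_single (m : P₁ × P₂) (r : TriRing A₁ A₂ W) :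
    psi A₁ A₂ W P₂ P₁ (Finsupp.single m r) = wmk A₂ W P₂ r.snd m.2 := by
  rw [psi, Finsupp.lsum_single]
  rfl

end Aux2
section Aux3

open TrivSqZeroExt MulOpposite Finsupp

variable {A₁ A₂ W P₂}
variable {P₁ : Type} [AddCommGroup P₁] [Module A₁ P₁]
variable [Module (TriRing A₁ A₂ W) (P₁ × P₂)]
variable {φ : WTensor A₂ W P₂ →ₗ[ℤ] P₁}
variable (hinl : ∀ (a₁ : A₁) (a₂ : A₂) (p₁ : P₁) (p₂ : P₂),
      (TrivSqZeroExt.inl (a₁, a₂) : TriRing A₁ A₂ W) • ((p₁, p₂) : P₁ × P₂)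
        = (a₁ • p₁, a₂ • p₂))
variable (hinr : ∀ (w : W) (p₁ : P₁) (p₂ : P₂),
      (TrivSqZeroExt.inr w : TriRing A₁ A₂ W) • ((p₁, p₂) : P₁ × P₂)
        = (φ (wmk A₂ W P₂ w p₂), 0))

include hinl hinr

/-- The action of a general element of the triangular ring, in coordinates. -/
theorem smul_pair (r : TriRing A₁ A₂ W) (m : P₁ × P₂) :
    r • m = (r.fst.1 • m.1 + φ (wmk A₂ W P₂ r.snd m.2), r.fst.2 • m.2) := by
  have h1 : (inl r.fst : TriRing A₁ A₂ W) • m = (r.fst.1 • m.1, r.fst.2 • m.2) :=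
    hinl r.fst.1 r.fst.2 m.1 m.2
  have h2 : (inr r.snd : TriRing A₁ A₂ W) • m = (φ (wmk A₂ W P₂ r.snd m.2), 0) :=
    hinr r.snd m.1 m.2
  calc r • m = ((inl r.fst + inr r.snd : TriRing A₁ A₂ W)) • m := by
        rw [inl_fst_add_inr_snd_eq]
    _ = (inl r.fst : TriRing A₁ A₂ W) • m + (inr r.snd : TriRing A₁ A₂ W) • m := add_smul _ _ _
    _ = _ := by rw [h1, h2, Prod.mk_add_mk, add_zero]

theorem tL_sig1 (f : P₁ →₀ A₁) :
    Finsupp.linearCombination (TriRing A₁ A₂ W) (id : P₁ × P₂ → P₁ × P₂)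
        (sig1 A₁ A₂ W P₂ P₁ f)
      = ((Finsupp.linearCombination A₁ id f : P₁), (0 : P₂)) := by
  induction f using Finsupp.induction_linear with
  | zero => ?_
  | add f g hf hg => ?_
  | single q a => ?_
  · simp
    rfl
  ·
    rw [map_add, map_add, hf, hg, map_add, Prod.mk_add_mk, add_zero]
  ·
    rw [sig1_single, Finsupp.linearCombination_single, Finsupp.linearCombination_single]
    show (inl ((a, 0) : A₁ × A₂) : TriRing A₁ A₂ W) • ((q, 0) : P₁ × P₂) = (a • q, (0 : P₂))
    rw [hinl, zero_smul]

theorem tL_sig2 (f : P₂ →₀ A₂) :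
    Finsupp.linearCombination (TriRing A₁ A₂ W) (id : P₁ × P₂ → P₁ × P₂)
        (sig2 A₁ A₂ W P₂ P₁ f)
      = ((0 : P₁), (Finsupp.linearCombination A₂ id f : P₂)) := by
  induction f using Finsupp.induction_linear with
  | zero => ?_
  | add f g hf hg => ?_
  | single q a => ?_
  · simp
    rfl
  ·
    rw [map_add, map_add, hf, hg, map_add, Prod.mk_add_mk, add_zero]
  ·
    rw [sig2_single, Finsupp.linearCombination_single, Finsupp.linearCombination_single]
    show (inl (((0:A₁), a) : A₁ × A₂) : TriRing A₁ A₂ W) • ((0, q) : P₁ × P₂) = ((0 : P₁), a • q)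
    rw [hinl, zero_smul]

variable {g₂ : P₂ →ₗ[A₂] (P₂ →₀ A₂)}

theorem tL_theta (hg₂ : Function.LeftInverse (Finsupp.linearCombination A₂ id) g₂)
    (x : WTensor A₂ W P₂) :
    Finsupp.linearCombination (TriRing A₁ A₂ W) (id : P₁ × P₂ → P₁ × P₂)
        (theta A₁ A₂ W P₂ P₁ g₂ x)
      = ((φ x : P₁), (0 : P₂)) := by
  induction x using wt_induction with
  | h0 => ?_
  | hmk w p => ?_
  | hadd x y hx hy => ?_
  · simp
    rfl
  ·
    set HH : P₂ →+ P₁ × P₂ :=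
      (AddMonoidHom.inl P₁ P₂).comp (φ.toAddMonoidHom.comp (wmkR w).toAddMonoidHom) with hHH
    calc Finsupp.linearCombination (TriRing A₁ A₂ W) (id : P₁ × P₂ → P₁ × P₂)
          (theta A₁ A₂ W P₂ P₁ g₂ (wmk A₂ W P₂ w p))
        = (g₂ p).sum (fun q a => HH (a • q)) := by
          rw [theta_wmk, map_finsuppSum]
          refine Finsupp.sum_congr fun q _ => ?_
          rw [Finsupp.linearCombination_single]
          show (inr (op (g₂ p q) • w) : TriRing A₁ A₂ W) • ((0, q) : P₁ × P₂)
            = ((φ (wmk A₂ W P₂ w ((g₂ p q) • q)) : P₁), (0 : P₂))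
          rw [hinr, wmk_op]
      _ = HH ((g₂ p).sum (fun q a => a • q)) := (map_finsuppSum HH _ _).symm
      _ = HH p := by
          congr 1
          have : (g₂ p).sum (fun q a => a • q)
              = Finsupp.linearCombination A₂ (id : P₂ → P₂) (g₂ p) := by
            simp [Finsupp.linearCombination_apply]
          rw [this, hg₂]
      _ = ((φ (wmk A₂ W P₂ w p) : P₁), (0 : P₂)) := rfl
  ·
    rw [map_add, map_add, hx, hy, map_add, Prod.mk_add_mk, add_zero]

end Aux3
section Aux4

open TrivSqZeroExt MulOpposite Finsupp

variable {A₁ A₂ W P₂}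
variable {P₁ : Type} [AddCommGroup P₁] [Module A₁ P₁]

theorem sig1_inl_smul (a₁ : A₁) (a₂ : A₂) (f : P₁ →₀ A₁) :
    (inl ((a₁, a₂) : A₁ × A₂) : TriRing A₁ A₂ W) • sig1 A₁ A₂ W P₂ P₁ f
      = sig1 A₁ A₂ W P₂ P₁ (a₁ • f) := by
  induction f using Finsupp.induction_linear with
  | zero => simp
  | add f g hf hg => rw [map_add, smul_add, hf, hg, smul_add, map_add]
  | single q a =>
      rw [sig1_single, Finsupp.smul_single, smul_eq_mul, inl_mul_inl,
        Finsupp.smul_single, smul_eq_mul, sig1_single, Prod.mk_mul_mk, mul_zero]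

theorem sig2_inl_smul (a₁ : A₁) (a₂ : A₂) (f : P₂ →₀ A₂) :
    (inl ((a₁, a₂) : A₁ × A₂) : TriRing A₁ A₂ W) • sig2 A₁ A₂ W P₂ P₁ f
      = sig2 A₁ A₂ W P₂ P₁ (a₂ • f) := by
  induction f using Finsupp.induction_linear with
  | zero => simp
  | add f g hf hg => rw [map_add, smul_add, hf, hg, smul_add, map_add]
  | single q b =>
      rw [sig2_single, Finsupp.smul_single, smul_eq_mul, inl_mul_inl,
        Finsupp.smul_single, smul_eq_mul, sig2_single, Prod.mk_mul_mk, mul_zero]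

theorem sig1_inr_smul (w : W) (f : P₁ →₀ A₁) :
    (inr w : TriRing A₁ A₂ W) • sig1 A₁ A₂ W P₂ P₁ f = 0 := by
  induction f using Finsupp.induction_linear with
  | zero => simp
  | add f g hf hg => rw [map_add, smul_add, hf, hg, add_zero]
  | single q a =>
      rw [sig1_single, Finsupp.smul_single, smul_eq_mul, inr_mul_inl]
      have : (op ((a, (0:A₂)) : A₁ × A₂)) • w = 0 := by
        rw [pair_op_smul_W, op_zero, zero_smul]
      rw [show (inr (op ((a, (0:A₂)) : A₁ × A₂) • w) : TriRing A₁ A₂ W) = 0 by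
        rw [this, inr_zero]]
      rw [Finsupp.single_zero]

theorem sig2_inr_smul (w : W) (f : P₂ →₀ A₂) :
    (inr w : TriRing A₁ A₂ W) • sig2 A₁ A₂ W P₂ P₁ f
      = Finsupp.lsum (R := ℤ) ℤ (fun q => c3 A₁ A₂ W P₂ P₁ q w) f := by
  induction f using Finsupp.induction_linear with
  | zero => simp
  | add f g hf hg => rw [map_add, smul_add, hf, hg, map_add]
  | single q b =>
      rw [sig2_single, Finsupp.smul_single, smul_eq_mul, inr_mul_inl, Finsupp.lsum_single,
        c3_apply]
      rfl

variable (g₂ : P₂ →ₗ[A₂] (P₂ →₀ A₂))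

theorem theta_eq_inr_smul_sig2 (w : W) (p : P₂) :
    theta A₁ A₂ W P₂ P₁ g₂ (wmk A₂ W P₂ w p)
      = (inr w : TriRing A₁ A₂ W) • sig2 A₁ A₂ W P₂ P₁ (g₂ p) := by
  rw [sig2_inr_smul, theta_wmk]
  exact (thetaW_apply A₁ A₂ W P₂ P₁ g₂ w p).symm

theorem theta_inr_smul (w : W) (x : WTensor A₂ W P₂) :
    (inr w : TriRing A₁ A₂ W) • theta A₁ A₂ W P₂ P₁ g₂ x = 0 := by
  induction x using wt_induction with
  | h0 => simp
  | hadd x y hx hy => rw [map_add, smul_add, hx, hy, add_zero]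
  | hmk w' p =>
      rw [theta_wmk, Finsupp.smul_sum]
      simp [Finsupp.smul_single, smul_eq_mul, inr_mul_inr]

theorem theta_inl_smul (a₁ : A₁) (a₂ : A₂) (x : WTensor A₂ W P₂) :
    (inl ((a₁, a₂) : A₁ × A₂) : TriRing A₁ A₂ W) • theta A₁ A₂ W P₂ P₁ g₂ x
      = theta A₁ A₂ W P₂ P₁ g₂ (tau A₁ A₂ W P₂ a₁ x) := by
  induction x using wt_induction with
  | h0 => simp
  | hadd x y hx hy => rw [map_add, smul_add, hx, hy, map_add, map_add]
  | hmk w p =>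
      rw [tau_wmk, theta_wmk, theta_wmk, Finsupp.smul_sum]
      refine Finsupp.sum_congr fun q _ => ?_
      rw [Finsupp.smul_single, smul_eq_mul, inl_mul_inr]
      congr 1
      show (inr (((a₁, a₂) : A₁ × A₂) • (op (g₂ p q) • w)) : TriRing A₁ A₂ W)
        = inr (op (g₂ p q) • (a₁ • w))
      rw [pair_smul_W, smul_comm]

theorem psi_inl_smul (a₁ : A₁) (a₂ : A₂) (g : (P₁ × P₂) →₀ TriRing A₁ A₂ W) :
    psi A₁ A₂ W P₂ P₁ ((inl ((a₁, a₂) : A₁ × A₂) : TriRing A₁ A₂ W) • g)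
      = tau A₁ A₂ W P₂ a₁ (psi A₁ A₂ W P₂ P₁ g) := by
  induction g using Finsupp.induction_linear with
  | zero => simp
  | add f g hf hg => rw [smul_add, map_add, hf, hg, map_add, map_add]
  | single m r =>
      rw [Finsupp.smul_single, smul_eq_mul, psi_single, psi_single, tau_wmk]
      congr 1
      rw [snd_mul, fst_inl, snd_inl]
      show ((a₁, a₂) : A₁ × A₂) • r.snd + (op r.fst) • (0 : W) = a₁ • r.snd
      rw [smul_zero, add_zero, pair_smul_W]

end Aux4

section Aux5

open TrivSqZeroExt MulOpposite Finsupp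

variable {A₁ A₂ W P₂}
variable {P₁ : Type} [AddCommGroup P₁] [Module A₁ P₁]
variable [Module (TriRing A₁ A₂ W) (P₁ × P₂)]
variable {φ : WTensor A₂ W P₂ →ₗ[ℤ] P₁}
variable (hinl : ∀ (a₁ : A₁) (a₂ : A₂) (p₁ : P₁) (p₂ : P₂),
      (TrivSqZeroExt.inl (a₁, a₂) : TriRing A₁ A₂ W) • ((p₁, p₂) : P₁ × P₂)
        = (a₁ • p₁, a₂ • p₂))
variable (hinr : ∀ (w : W) (p₁ : P₁) (p₂ : P₂),
      (TrivSqZeroExt.inr w : TriRing A₁ A₂ W) • ((p₁, p₂) : P₁ × P₂)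
        = (φ (wmk A₂ W P₂ w p₂), 0))

include hinl hinr

theorem psi_inr_smul (w : W) (g : (P₁ × P₂) →₀ TriRing A₁ A₂ W) :
    psi A₁ A₂ W P₂ P₁ ((inr w : TriRing A₁ A₂ W) • g)
      = wmk A₂ W P₂ w
          ((Finsupp.linearCombination (TriRing A₁ A₂ W) (id : P₁ × P₂ → P₁ × P₂) g).2) := by
  induction g using Finsupp.induction_linear with
  | zero => simp [wmk_zero_right]
  | add f g hf hg =>
      rw [smul_add, map_add, hf, hg, map_add, Prod.snd_add, wmk_add_right]
  | single m r =>
      rw [Finsupp.smul_single, smul_eq_mul, psi_single, Finsupp.linearCombination_single]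
      rw [smul_pair hinl hinr, snd_mul, fst_inr, snd_inr]
      show wmk A₂ W P₂ (((0 : A₁ × A₂)) • r.snd + (op r.fst) • w) m.2
        = wmk A₂ W P₂ w (r.fst.2 • (id m).2)
      rw [zero_smul, zero_add]
      show wmk A₂ W P₂ ((op ((r.fst.1, r.fst.2) : A₁ × A₂)) • w) m.2 = _
      rw [pair_op_smul_W, wmk_op]
      rfl

end Aux5

/-- let `W` be an `(A₁,A₂)`-bimodule finitely generated as a left `A₁`-module,
`A = A₁[W]A₂`, and `M = (P₁, φ, P₂)` the `A`-module determined by projective modules `P₁`,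
`P₂` over `A₁`, `A₂` and the `A₁`-linear multiplication map `φ : W ⊗_{A₂} P₂ → P₁`
(realized on the underlying group `P₁ × P₂`).  Then `M` is a projective `A`-module if and
only if `φ` is a split monomorphism of `A₁`-modules. -/
theorem stmt2
    (hWfg : Module.Finite A₁ W)
    (P₁ : Type) [AddCommGroup P₁] [Module A₁ P₁]
    (hP₁ : Module.Projective A₁ P₁) (hP₂ : Module.Projective A₂ P₂)
    (φ : WTensor A₂ W P₂ →ₗ[ℤ] P₁)
    (hφ : ∀ (a : A₁) (x : WTensor A₂ W P₂), φ (tau A₁ A₂ W P₂ a x) = a • φ x)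
    [Module (TriRing A₁ A₂ W) (P₁ × P₂)]
    (hinl : ∀ (a₁ : A₁) (a₂ : A₂) (p₁ : P₁) (p₂ : P₂),
      (TrivSqZeroExt.inl (a₁, a₂) : TriRing A₁ A₂ W) • ((p₁, p₂) : P₁ × P₂)
        = (a₁ • p₁, a₂ • p₂))
    (hinr : ∀ (w : W) (p₁ : P₁) (p₂ : P₂),
      (TrivSqZeroExt.inr w : TriRing A₁ A₂ W) • ((p₁, p₂) : P₁ × P₂)
        = (φ (wmk A₂ W P₂ w p₂), 0)) :
    Module.Projective (TriRing A₁ A₂ W) (P₁ × P₂) ↔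
      ∃ ρ : P₁ →ₗ[ℤ] WTensor A₂ W P₂,
        (∀ (a : A₁) (p : P₁), ρ (a • p) = tau A₁ A₂ W P₂ a (ρ p)) ∧
        ∀ x : WTensor A₂ W P₂, ρ (φ x) = x := by
  classical
  constructor
  · -- projective → split
    intro hproj
    obtain ⟨s, hs⟩ := hproj.out
    refine ⟨(psi A₁ A₂ W P₂ P₁) ∘ₗ (s.toAddMonoidHom.toIntLinearMap) ∘ₗ
      ((AddMonoidHom.inl P₁ P₂).toIntLinearMap), ?_, ?_⟩
    · intro a p
      show psi A₁ A₂ W P₂ P₁ (s ((a • p, 0) : P₁ × P₂))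
        = tau A₁ A₂ W P₂ a (psi A₁ A₂ W P₂ P₁ (s ((p, 0) : P₁ × P₂)))
      have h1 : ((a • p, (0 : P₂)) : P₁ × P₂)
          = (TrivSqZeroExt.inl ((a, 0) : A₁ × A₂) : TriRing A₁ A₂ W) • ((p, 0) : P₁ × P₂) := by
        rw [hinl, zero_smul]
      rw [h1, LinearMap.map_smul, psi_inl_smul]
    · intro x
      induction x using wt_induction with
      | h0 =>
          show psi A₁ A₂ W P₂ P₁ (s ((φ 0, 0) : P₁ × P₂)) = 0
          rw [map_zero φ]
          rw [show ((0 : P₁), (0 : P₂)) = (0 : P₁ × P₂) from rfl, map_zero s, map_zero]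
      | hadd x y hx hy =>
          show psi A₁ A₂ W P₂ P₁ (s ((φ (x + y), 0) : P₁ × P₂)) = x + y
          rw [map_add φ]
          rw [show ((φ x + φ y, (0 : P₂)) : P₁ × P₂) = (φ x, (0 : P₂)) + (φ y, (0 : P₂)) by
            rw [Prod.mk_add_mk, add_zero]]
          rw [map_add s, map_add]
          exact congrArg₂ (· + ·) hx hy
      | hmk w q =>
          show psi A₁ A₂ W P₂ P₁ (s ((φ (wmk A₂ W P₂ w q), 0) : P₁ × P₂)) = wmk A₂ W P₂ w q
          have h1 : ((φ (wmk A₂ W P₂ w q), (0 : P₂)) : P₁ × P₂)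
              = (TrivSqZeroExt.inr w : TriRing A₁ A₂ W) • ((0, q) : P₁ × P₂) :=
            (hinr w 0 q).symm
          rw [h1, LinearMap.map_smul, psi_inr_smul hinl hinr, hs]
  · -- split → projective
    rintro ⟨ρ, hρ1, hρ2⟩
    obtain ⟨g₁, hg₁⟩ := hP₁.out
    obtain ⟨g₂, hg₂⟩ := hP₂.out
    set Sf : P₁ × P₂ → ((P₁ × P₂) →₀ TriRing A₁ A₂ W) := fun x =>
      sig1 A₁ A₂ W P₂ P₁ (g₁ (x.1 - φ (ρ x.1))) + theta A₁ A₂ W P₂ P₁ g₂ (ρ x.1)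
        + sig2 A₁ A₂ W P₂ P₁ (g₂ x.2) with hSf
    have Sadd : ∀ x y : P₁ × P₂, Sf (x + y) = Sf x + Sf y := by
      intro x y
      simp only [hSf]
      rw [show (x + y).1 = x.1 + y.1 from rfl, show (x + y).2 = x.2 + y.2 from rfl]
      rw [map_add ρ, map_add φ]
      rw [show x.1 + y.1 - (φ (ρ x.1) + φ (ρ y.1))
        = (x.1 - φ (ρ x.1)) + (y.1 - φ (ρ y.1)) by abel]
      rw [map_add g₁, map_add g₂, map_add, map_add, map_add]
      abel
    have Sinl : ∀ (a : A₁) (b : A₂) (x : P₁ × P₂),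
        Sf ((TrivSqZeroExt.inl ((a, b) : A₁ × A₂) : TriRing A₁ A₂ W) • x)
          = (TrivSqZeroExt.inl ((a, b) : A₁ × A₂) : TriRing A₁ A₂ W) • Sf x := by
      intro a b x
      have hx : (TrivSqZeroExt.inl ((a, b) : A₁ × A₂) : TriRing A₁ A₂ W) • x
          = ((a • x.1, b • x.2) : P₁ × P₂) := hinl a b x.1 x.2
      rw [hx]
      show sig1 A₁ A₂ W P₂ P₁ (g₁ (a • x.1 - φ (ρ (a • x.1))))
          + theta A₁ A₂ W P₂ P₁ g₂ (ρ (a • x.1)) + sig2 A₁ A₂ W P₂ P₁ (g₂ (b • x.2)) = _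
      rw [hρ1, hφ, ← smul_sub, LinearMap.map_smul g₁, LinearMap.map_smul g₂]
      rw [← sig1_inl_smul a b, ← sig2_inl_smul a b, ← theta_inl_smul g₂ a b]
      rw [hSf]
      rw [smul_add, smul_add]
    have Sinr : ∀ (w : W) (x : P₁ × P₂),
        Sf ((TrivSqZeroExt.inr w : TriRing A₁ A₂ W) • x)
          = (TrivSqZeroExt.inr w : TriRing A₁ A₂ W) • Sf x := by
      intro w x
      have hx : (TrivSqZeroExt.inr w : TriRing A₁ A₂ W) • x
          = ((φ (wmk A₂ W P₂ w x.2), 0) : P₁ × P₂) := hinr w x.1 x.2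
      rw [hx]
      show sig1 A₁ A₂ W P₂ P₁ (g₁ (φ (wmk A₂ W P₂ w x.2) - φ (ρ (φ (wmk A₂ W P₂ w x.2)))))
          + theta A₁ A₂ W P₂ P₁ g₂ (ρ (φ (wmk A₂ W P₂ w x.2)))
          + sig2 A₁ A₂ W P₂ P₁ (g₂ (0 : P₂)) = _
      rw [hρ2, sub_self, map_zero g₁, map_zero, map_zero g₂, map_zero, add_zero, zero_add]
      rw [theta_eq_inr_smul_sig2, hSf]
      rw [smul_add, smul_add, sig1_inr_smul w, theta_inr_smul, zero_add, zero_add]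
    have Ssmul : ∀ (r : TriRing A₁ A₂ W) (x : P₁ × P₂), Sf (r • x) = r • Sf x := by
      intro r x
      calc Sf (r • x)
          = Sf ((TrivSqZeroExt.inl r.fst : TriRing A₁ A₂ W) • x
              + (TrivSqZeroExt.inr r.snd : TriRing A₁ A₂ W) • x) := by
            rw [← add_smul, TrivSqZeroExt.inl_fst_add_inr_snd_eq]
        _ = Sf ((TrivSqZeroExt.inl r.fst : TriRing A₁ A₂ W) • x)
              + Sf ((TrivSqZeroExt.inr r.snd : TriRing A₁ A₂ W) • x) := Sadd _ _
        _ = (TrivSqZeroExt.inl r.fst : TriRing A₁ A₂ W) • Sf x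
              + (TrivSqZeroExt.inr r.snd : TriRing A₁ A₂ W) • Sf x := by
            rw [show (TrivSqZeroExt.inl r.fst : TriRing A₁ A₂ W)
              = TrivSqZeroExt.inl (r.fst.1, r.fst.2) from rfl]
            rw [Sinl r.fst.1 r.fst.2, Sinr]
        _ = r • Sf x := by rw [← add_smul, TrivSqZeroExt.inl_fst_add_inr_snd_eq]
    refine ⟨⟨{ toFun := Sf, map_add' := Sadd, map_smul' := Ssmul }, ?_⟩⟩
    intro x
    show Finsupp.linearCombination (TriRing A₁ A₂ W) (id : P₁ × P₂ → P₁ × P₂) (Sf x) = x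
    rw [hSf]
    rw [map_add, map_add, tL_sig1 hinl hinr, tL_sig2 hinl hinr, tL_theta hinl hinr hg₂,
      hg₁, hg₂]
    rw [Prod.mk_add_mk, Prod.mk_add_mk]
    refine Prod.ext ?_ ?_ <;> simp
end
end
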